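/- Let A ∈ ℝ^{n×n} be symmetric positive semidefinite, V ∈ ℝ^{k×n}, W := V·A, and B ∈ ℝ^{k×k} symmetric. Then the block matrix M = [[A, Wᵀ],[W, B]] is positive semidefinite if and only if B − V·A·Vᵀ is positive semidefinite. -/

import Mathlib

open Matrix

/-- For `A ⪰ 0`, `W = V·A` and symmetric `B`, the block matrix
`[[A, Wᵀ],[W, B]]` is positive semidefinite iff `B − V·A·Vᵀ ⪰ 0`. -/
theorem stmt1 (n k : ℕ) (A : Matrix (Fin n) (Fin n) ℝ) (hA : A.PosSemidef)
    (V : Matrix (Fin k) (Fin n) ℝ) (B : Matrix (Fin k) (Fin k) ℝ) (hB : B.IsSymm) :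
    (Matrix.fromBlocks A (V * A)ᵀ (V * A) B).PosSemidef ↔ (B - V * A * Vᵀ).PosSemidef := by
  have hAt : Aᵀ = A := hA.isHermitian.eq
  -- key quadratic identity
  have key : ∀ (u : Fin n → ℝ) (v : Fin k → ℝ),
      Sum.elim u v ⬝ᵥ (fromBlocks A (V * A)ᵀ (V * A) B) *ᵥ Sum.elim u v
        = (u + Vᵀ *ᵥ v) ⬝ᵥ A *ᵥ (u + Vᵀ *ᵥ v) + v ⬝ᵥ (B - V * A * Vᵀ) *ᵥ v := by
    intro u v
    have h1 : (V * A)ᵀ = A * Vᵀ := by rw [transpose_mul, hAt]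
    simp only [fromBlocks_mulVec, sumElim_dotProduct_sumElim, h1,
      mulVec_add, add_mulVec, dotProduct_add, add_dotProduct, sub_mulVec,
      dotProduct_sub, mulVec_mulVec, Sum.elim_comp_inl, Sum.elim_comp_inr]
    have h2 : v ⬝ᵥ (V * A) *ᵥ u = (Vᵀ *ᵥ v) ⬝ᵥ A *ᵥ u := by
      rw [← mulVec_mulVec, dotProduct_mulVec v V, ← mulVec_transpose]
    have h3 : (Vᵀ *ᵥ v) ⬝ᵥ (A * Vᵀ) *ᵥ v = v ⬝ᵥ (V * A * Vᵀ) *ᵥ v := by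
      rw [Matrix.mul_assoc, ← mulVec_mulVec v V (A * Vᵀ), dotProduct_mulVec v V, ← mulVec_transpose]
    rw [h2, h3]
    ring
  rw [posSemidef_iff_dotProduct_mulVec, posSemidef_iff_dotProduct_mulVec]
  constructor
  · rintro ⟨hM, hq⟩
    refine ⟨?_, fun v => ?_⟩
    · have : (B - V * A * Vᵀ)ᵀ = B - V * A * Vᵀ := by
        rw [transpose_sub, hB.eq, transpose_mul, transpose_mul, transpose_transpose, hAt,
          Matrix.mul_assoc]
      exact this
    · have := hq (Sum.elim (-(Vᵀ *ᵥ v)) v)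
      rw [show star (Sum.elim (-(Vᵀ *ᵥ v)) v) = Sum.elim (-(Vᵀ *ᵥ v)) v from rfl, key] at this
      simpa using this
  · rintro ⟨hS, hq⟩
    constructor
    · have : (fromBlocks A (V * A)ᵀ (V * A) B)ᵀ = fromBlocks A (V * A)ᵀ (V * A) B := by
        rw [fromBlocks_transpose, hAt, transpose_transpose, hB.eq]
      exact this
    · intro x
      have hx : x = Sum.elim (x ∘ Sum.inl) (x ∘ Sum.inr) := by
        funext i; cases i <;> rfl
      rw [show star x = x from rfl, hx, key]
      have := hq (x ∘ Sum.inr)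
      have h2 := hA.dotProduct_mulVec_nonneg ((x ∘ Sum.inl) + Vᵀ *ᵥ (x ∘ Sum.inr))
      simp only [star_trivial] at this h2
      linarith
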